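/- arXiv:2508.05586 — 2 statements merged into one kernel-verified Lean document; each statement's English description precedes it below -/
import Mathlib

section
/- Let p₀ : ℝ × ℝ → ℝ be twice continuously differentiable, let ψ : ℝ → ℝ be three times differentiable on an open interval I, and suppose p₀(−ψ'(ξ), ξ) = E for all ξ ∈ I. Set α(ξ) := ∂ₓp₀(−ψ'(ξ), ξ) and Δ(x,ξ) := ∂²ₓp₀(x,ξ)·∂²_ξp₀(x,ξ) − (∂ₓ∂_ξp₀(x,ξ))². Then for all ζ ∈ I, Δ(−ψ'(ζ), ζ) = −(α'(ζ))² + ψ'''(ζ)·α(ζ)·∂²ₓp₀(−ψ'(ζ), ζ). -/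
/-- Partial derivative of `p : ℝ → ℝ → ℝ` in the first (spatial) variable. -/
noncomputable def pdX (p : ℝ → ℝ → ℝ) (x ξ : ℝ) : ℝ := deriv (fun x' => p x' ξ) x

/-- Partial derivative of `p : ℝ → ℝ → ℝ` in the second (momentum) variable. -/
noncomputable def pdXi (p : ℝ → ℝ → ℝ) (x ξ : ℝ) : ℝ := deriv (fun ξ' => p x ξ') ξ

/-- Pure second partial derivative `∂²ₓp`. -/
noncomputable def pdXX (p : ℝ → ℝ → ℝ) (x ξ : ℝ) : ℝ := deriv (fun x' => pdX p x' ξ) x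

/-- Pure second partial derivative `∂²_ξp`. -/
noncomputable def pdXiXi (p : ℝ → ℝ → ℝ) (x ξ : ℝ) : ℝ := deriv (fun ξ' => pdXi p x ξ') ξ

/-- Mixed partial derivative `∂ₓ∂_ξp` (first in `ξ`, then in `x`; for `C²` symbols this agrees
with the other order). -/
noncomputable def pdXXi (p : ℝ → ℝ → ℝ) (x ξ : ℝ) : ℝ := deriv (fun ξ' => pdX p x ξ') ξ

/-- Hessian determinant `Δ(x,ξ) = ∂²ₓp₀·∂²_ξp₀ − (∂ₓ∂_ξp₀)²` of the principal symbol. -/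
noncomputable def hessDelta (p : ℝ → ℝ → ℝ) (x ξ : ℝ) : ℝ :=
  pdXX p x ξ * pdXiXi p x ξ - (pdXXi p x ξ) ^ 2

set_option maxHeartbeats 1000000 in
/-- Let `p₀` be `C²`, `ψ` three times differentiable on the open interval `I = (a,b)`, with
`p₀(−ψ'(ξ), ξ) = E` on `I`, and `α(ξ) := ∂ₓp₀(−ψ'(ξ), ξ)`. Then for all `ζ ∈ I`,
`Δ(−ψ'(ζ), ζ) = −(α'(ζ))² + ψ'''(ζ)·α(ζ)·∂²ₓp₀(−ψ'(ζ), ζ)`. -/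
theorem stmt_8 (p₀ : ℝ → ℝ → ℝ) (a b : ℝ) (ψ ψ' ψ'' ψ''' : ℝ → ℝ) (E : ℝ)
    (hp : ContDiff ℝ 2 (fun q : ℝ × ℝ => p₀ q.1 q.2))
    (hψ : ∀ ξ ∈ Set.Ioo a b, HasDerivAt ψ (ψ' ξ) ξ)
    (hψ' : ∀ ξ ∈ Set.Ioo a b, HasDerivAt ψ' (ψ'' ξ) ξ)
    (hψ'' : ∀ ξ ∈ Set.Ioo a b, HasDerivAt ψ'' (ψ''' ξ) ξ)
    (heik : ∀ ξ ∈ Set.Ioo a b, p₀ (-(ψ' ξ)) ξ = E) :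
    ∀ ζ ∈ Set.Ioo a b,
      hessDelta p₀ (-(ψ' ζ)) ζ
        = -(deriv (fun ξ => pdX p₀ (-(ψ' ξ)) ξ) ζ) ^ 2
          + ψ''' ζ * pdX p₀ (-(ψ' ζ)) ζ * pdXX p₀ (-(ψ' ζ)) ζ := by
  intro ζ hζ
  set F : ℝ × ℝ → ℝ := fun q : ℝ × ℝ => p₀ q.1 q.2 with hFdef
  set f₁ : ℝ × ℝ → ℝ × ℝ →L[ℝ] ℝ := fderiv ℝ F with hf1def
  set f₂ : ℝ × ℝ → ℝ × ℝ →L[ℝ] (ℝ × ℝ →L[ℝ] ℝ) := fderiv ℝ f₁ with hf2def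
  have hF1 : Differentiable ℝ F := hp.differentiable (by norm_num)
  have hF2 : Differentiable ℝ f₁ :=
    (hp.fderiv_right (m := 1) (by norm_num)).differentiable (by norm_num)
  have hd1 : ∀ q : ℝ × ℝ, HasFDerivAt F (f₁ q) q := fun q => (hF1 q).hasFDerivAt
  have hd2 : ∀ q : ℝ × ℝ, HasFDerivAt f₁ (f₂ q) q := fun q => (hF2 q).hasFDerivAt
  -- expansion of a CLM on ℝ × ℝ in the standard basis
  have expand : ∀ (G : Type) [inst : NormedAddCommGroup G] [inst2 : NormedSpace ℝ G]
      (L : ℝ × ℝ →L[ℝ] G) (u v : ℝ), L (u, v) = u • L (1, 0) + v • L (0, 1) := by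
    intro G _ _ L u v
    have h : (u, v) = u • ((1:ℝ), (0:ℝ)) + v • ((0:ℝ), (1:ℝ)) := by
      simp [Prod.smul_mk, Prod.ext_iff]
    rw [h, map_add, map_smul, map_smul]
  -- identification of first partials
  have hlineX : ∀ x ξ : ℝ, HasDerivAt (fun x' : ℝ => (x', ξ)) ((1:ℝ), (0:ℝ)) x :=
    fun x ξ => (hasDerivAt_id x).prodMk (hasDerivAt_const x ξ)
  have hlineXi : ∀ x ξ : ℝ, HasDerivAt (fun ξ' : ℝ => (x, ξ')) ((0:ℝ), (1:ℝ)) ξ :=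
    fun x ξ => (hasDerivAt_const ξ x).prodMk (hasDerivAt_id ξ)
  have hpdX : ∀ x ξ : ℝ, pdX p₀ x ξ = f₁ (x, ξ) (1, 0) := by
    intro x ξ
    have h := (hd1 (x, ξ)).comp_hasDerivAt x (hlineX x ξ)
    simpa [pdX, Function.comp_def, hFdef] using h.deriv
  have hpdXi : ∀ x ξ : ℝ, pdXi p₀ x ξ = f₁ (x, ξ) (0, 1) := by
    intro x ξ
    have h := (hd1 (x, ξ)).comp_hasDerivAt ξ (hlineXi x ξ)
    simpa [pdXi, Function.comp_def, hFdef] using h.deriv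
  -- derivative of q ↦ f₁ q v along a curve
  have key : ∀ (v : ℝ × ℝ) (γ : ℝ → ℝ × ℝ) (γ' : ℝ × ℝ) (t : ℝ), HasDerivAt γ γ' t →
      HasDerivAt (fun s => f₁ (γ s) v) (f₂ (γ t) γ' v) t := by
    intro v γ γ' t hγ
    have h1 : HasFDerivAt (fun q => f₁ q v)
        ((ContinuousLinearMap.apply ℝ ℝ v).comp (f₂ (γ t))) (γ t) :=
      (ContinuousLinearMap.apply ℝ ℝ v).hasFDerivAt.comp _ (hd2 (γ t))
    simpa [Function.comp_def] using h1.comp_hasDerivAt t hγ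
  -- identification of second partials
  have hpdXX : ∀ x ξ : ℝ, pdXX p₀ x ξ = f₂ (x, ξ) (1, 0) (1, 0) := by
    intro x ξ
    have h := key (1, 0) (fun x' : ℝ => (x', ξ)) (1, 0) x (hlineX x ξ)
    have h2 : (fun x' : ℝ => pdX p₀ x' ξ) = fun x' : ℝ => f₁ (x', ξ) (1, 0) :=
      funext fun x' => hpdX x' ξ
    rw [pdXX, h2]
    exact h.deriv
  have hpdXXi : ∀ x ξ : ℝ, pdXXi p₀ x ξ = f₂ (x, ξ) (0, 1) (1, 0) := by
    intro x ξ
    have h := key (1, 0) (fun ξ' : ℝ => (x, ξ')) (0, 1) ξ (hlineXi x ξ)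
    have h2 : (fun ξ' : ℝ => pdX p₀ x ξ') = fun ξ' : ℝ => f₁ (x, ξ') (1, 0) :=
      funext fun ξ' => hpdX x ξ'
    rw [pdXXi, h2]
    exact h.deriv
  have hpdXiXi : ∀ x ξ : ℝ, pdXiXi p₀ x ξ = f₂ (x, ξ) (0, 1) (0, 1) := by
    intro x ξ
    have h := key (0, 1) (fun ξ' : ℝ => (x, ξ')) (0, 1) ξ (hlineXi x ξ)
    have h2 : (fun ξ' : ℝ => pdXi p₀ x ξ') = fun ξ' : ℝ => f₁ (x, ξ') (0, 1) :=
      funext fun ξ' => hpdXi x ξ'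
    rw [pdXiXi, h2]
    exact h.deriv
  -- the eikonal curve
  set γ : ℝ → ℝ × ℝ := fun ξ => (-(ψ' ξ), ξ) with hγdef
  have hγd : ∀ ξ ∈ Set.Ioo a b, HasDerivAt γ (-(ψ'' ξ), 1) ξ := by
    intro ξ hξ
    exact ((hψ' ξ hξ).neg).prodMk (hasDerivAt_id ξ)
  have hIoo : Set.Ioo a b ∈ nhds ζ := Ioo_mem_nhds hζ.1 hζ.2
  -- first eikonal consequence : f₁ (γ ξ) (0,1) = ψ'' ξ * f₁ (γ ξ) (1,0) on I
  have heik1 : ∀ ξ ∈ Set.Ioo a b, f₁ (γ ξ) (0, 1) = ψ'' ξ * f₁ (γ ξ) (1, 0) := by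
    intro ξ hξ
    have hcomp : HasDerivAt (fun s => F (γ s)) (f₁ (γ ξ) (-(ψ'' ξ), 1)) ξ := by
      simpa [Function.comp_def] using (hd1 (γ ξ)).comp_hasDerivAt ξ (hγd ξ hξ)
    have hconst : HasDerivAt (fun s => F (γ s)) 0 ξ := by
      have hev : (fun s => F (γ s)) =ᶠ[nhds ξ] fun _ => E := by
        filter_upwards [Ioo_mem_nhds hξ.1 hξ.2] with s hs
        simpa [hFdef, hγdef] using heik s hs
      exact (hasDerivAt_const ξ E).congr_of_eventuallyEq hev
    have h0 : f₁ (γ ξ) (-(ψ'' ξ), 1) = 0 := hcomp.unique hconst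
    rw [expand ℝ (f₁ (γ ξ)) (-(ψ'' ξ)) 1] at h0
    simp only [smul_eq_mul, one_mul] at h0
    linarith
  -- derivative of α(ξ) = f₁ (γ ξ) (1,0) at ζ
  have hαd : HasDerivAt (fun ξ => f₁ (γ ξ) (1, 0)) (f₂ (γ ζ) (-(ψ'' ζ), 1) (1, 0)) ζ :=
    key (1, 0) γ _ ζ (hγd ζ hζ)
  -- derivative of ξ ↦ f₁ (γ ξ) (0,1) at ζ, two ways
  have hβd : HasDerivAt (fun ξ => f₁ (γ ξ) (0, 1)) (f₂ (γ ζ) (-(ψ'' ζ), 1) (0, 1)) ζ :=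
    key (0, 1) γ _ ζ (hγd ζ hζ)
  have hβd2 : HasDerivAt (fun ξ => f₁ (γ ξ) (0, 1))
      (ψ''' ζ * f₁ (γ ζ) (1, 0) + ψ'' ζ * f₂ (γ ζ) (-(ψ'' ζ), 1) (1, 0)) ζ := by
    have hmul : HasDerivAt (fun ξ => ψ'' ξ * f₁ (γ ξ) (1, 0))
        (ψ''' ζ * f₁ (γ ζ) (1, 0) + ψ'' ζ * f₂ (γ ζ) (-(ψ'' ζ), 1) (1, 0)) ζ :=
      (hψ'' ζ hζ).mul hαd
    apply hmul.congr_of_eventuallyEq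
    filter_upwards [hIoo] with s hs
    exact heik1 s hs
  have heq2 : f₂ (γ ζ) (-(ψ'' ζ), 1) (0, 1)
      = ψ''' ζ * f₁ (γ ζ) (1, 0) + ψ'' ζ * f₂ (γ ζ) (-(ψ'' ζ), 1) (1, 0) :=
    hβd.unique hβd2
  -- symmetry of second derivative
  have hsym : f₂ (γ ζ) (1, 0) (0, 1) = f₂ (γ ζ) (0, 1) (1, 0) := by
    have h := (hp.contDiffAt (x := γ ζ)).isSymmSndFDerivAt (by norm_num)
    exact h.eq (1, 0) (0, 1)
  -- abbreviations
  set A := f₂ (γ ζ) (1, 0) (1, 0) with hA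
  set B := f₂ (γ ζ) (0, 1) (1, 0) with hB
  set C := f₂ (γ ζ) (0, 1) (0, 1) with hC
  set al := f₁ (γ ζ) (1, 0) with hal
  -- expand the bilinear expressions in heq2 and hαd
  have hout : ∀ w : ℝ × ℝ, f₂ (γ ζ) (-(ψ'' ζ), 1) w
      = -(ψ'' ζ) * f₂ (γ ζ) (1, 0) w + f₂ (γ ζ) (0, 1) w := by
    intro w
    rw [expand _ (f₂ (γ ζ)) (-(ψ'' ζ)) 1]
    simp [smul_eq_mul]
  -- derivative of α as it appears in the goal
  have hαderiv : deriv (fun ξ => pdX p₀ (-(ψ' ξ)) ξ) ζ = -(ψ'' ζ) * A + B := by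
    have h2 : (fun ξ => pdX p₀ (-(ψ' ξ)) ξ) = fun ξ => f₁ (γ ξ) (1, 0) :=
      funext fun ξ => hpdX _ ξ
    rw [h2, hαd.deriv, hout (1, 0)]
  have heq2' : -(ψ'' ζ) * f₂ (γ ζ) (1, 0) (0, 1) + C
      = ψ''' ζ * al + ψ'' ζ * (-(ψ'' ζ) * A + B) := by
    rw [← hout (0, 1), ← hout (1, 0), heq2]
  rw [hsym] at heq2'
  -- final algebra
  have hgoal1 : hessDelta p₀ (-(ψ' ζ)) ζ = A * C - B ^ 2 := by
    rw [hessDelta, hpdXX, hpdXiXi, hpdXXi]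
  have hgoal2 : pdX p₀ (-(ψ' ζ)) ζ = al := hpdX _ ζ
  have hgoal3 : pdXX p₀ (-(ψ' ζ)) ζ = A := hpdXX _ ζ
  rw [hgoal1, hgoal2, hgoal3, hαderiv]
  linear_combination A * heq2'
end

section
/- Let f₀, f₁, f₂ : ℝ → ℝ with f₀ twice differentiable at τ, f₁ differentiable at τ, f₀'(τ) ≠ 0, and let C₀, C₁ ∈ ℝ. Set ω = f₁(τ)/f₀'(τ) and S̃₂ = (1/f₀'(τ))·(½·(f₁²/f₀')'(τ) − f₂(τ)), and define a₀(t) = C₀·e^{−iωt} and a₁(t) = (C₁ + i·C₀·S̃₂·t)·e^{−iωt}. Then for all t ∈ ℝ, f₀'(τ)·a₁'(t) + i·f₁(τ)·a₁(t) = −(f₁'(τ)·a₀'(t) + i·f₂(τ)·a₀(t)) + (i/2)·f₀''(τ)·a₀''(t); that is, a₁ solves the second transport equation in action-angle variables with the choice D₁(t,E) = i·C₀·S̃₂·t. -/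
lemma hasDerivAt_phase (ω t : ℝ) :
    HasDerivAt (fun t : ℝ => -(Complex.I * (ω:ℂ) * (t:ℂ))) (-(Complex.I * ω)) t := by
  have h : HasDerivAt (fun t : ℝ => (t:ℂ)) 1 t := by
    exact Complex.ofRealCLM.hasDerivAt (x := t)
  have h2 := (h.const_mul (Complex.I * ω)).neg
  rw [mul_one] at h2
  exact h2

/-- Leading amplitude in action-angle variables: `a₀(t) = C₀·e^{−iωt}`. -/
noncomputable def aaA0 (C₀ ω : ℝ) (t : ℝ) : ℂ :=
  (C₀ : ℂ) * Complex.exp (-(Complex.I * (ω : ℂ) * (t : ℂ)))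

/-- Subleading amplitude in action-angle variables:
`a₁(t) = (C₁ + i·C₀·S̃₂·t)·e^{−iωt}`. -/
noncomputable def aaA1 (C₀ C₁ ω S₂ : ℝ) (t : ℝ) : ℂ :=
  ((C₁ : ℂ) + Complex.I * (C₀ : ℂ) * (S₂ : ℂ) * (t : ℂ)) *
    Complex.exp (-(Complex.I * (ω : ℂ) * (t : ℂ)))

lemma hasDerivAt_aaA0 (C₀ ω t : ℝ) :
    HasDerivAt (aaA0 C₀ ω) (-(Complex.I * ω) * aaA0 C₀ ω t) t := by
  have h := ((hasDerivAt_phase ω t).cexp).const_mul (C₀ : ℂ)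
  have e : -(Complex.I * ω) * aaA0 C₀ ω t
      = (C₀:ℂ) * (Complex.exp (-(Complex.I * ω * t)) * -(Complex.I * ω)) := by
    simp [aaA0]; ring
  rw [e]; exact h

lemma deriv_aaA0 (C₀ ω : ℝ) :
    deriv (aaA0 C₀ ω) = fun t => -(Complex.I * ω) * aaA0 C₀ ω t :=
  funext fun t => (hasDerivAt_aaA0 C₀ ω t).deriv

lemma deriv2_aaA0 (C₀ ω t : ℝ) :
    deriv (deriv (aaA0 C₀ ω)) t = -(Complex.I * ω) * (-(Complex.I * ω) * aaA0 C₀ ω t) := by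
  rw [deriv_aaA0]
  exact ((hasDerivAt_aaA0 C₀ ω t).const_mul (-(Complex.I * ω))).deriv

lemma hasDerivAt_aaA1 (C₀ C₁ ω S₂ t : ℝ) :
    HasDerivAt (aaA1 C₀ C₁ ω S₂)
      (Complex.I * C₀ * S₂ * Complex.exp (-(Complex.I * ω * t))
        + -(Complex.I * ω) * aaA1 C₀ C₁ ω S₂ t) t := by
  have hlin : HasDerivAt (fun t : ℝ => (C₁:ℂ) + Complex.I * C₀ * S₂ * (t:ℂ))
      (Complex.I * C₀ * S₂) t := by
    have h : HasDerivAt (fun t : ℝ => (t:ℂ)) 1 t := by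
      exact Complex.ofRealCLM.hasDerivAt (x := t)
    simpa [mul_assoc] using (h.const_mul (Complex.I * (C₀:ℂ) * (S₂:ℂ))).const_add (C₁:ℂ)
  have h := hlin.mul ((hasDerivAt_phase ω t).cexp)
  have e : Complex.I * C₀ * S₂ * Complex.exp (-(Complex.I * ω * t))
        + -(Complex.I * ω) * aaA1 C₀ C₁ ω S₂ t
      = Complex.I * C₀ * S₂ * Complex.exp (-(Complex.I * ω * t))
        + ((C₁:ℂ) + Complex.I * C₀ * S₂ * t)
            * (Complex.exp (-(Complex.I * ω * t)) * -(Complex.I * ω)) := by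
    simp [aaA1]; ring
  rw [e]; exact h

lemma main_alg (a b b' c a'' ω S₂ C₀ C₁ t : ℝ)
    (h1 : a * ω = b) (h2 : a * S₂ = b' * ω - c - (1/2) * a'' * ω^2) :
    (a:ℂ) * (Complex.I * C₀ * S₂ * Complex.exp (-(Complex.I * ω * t))
        + -(Complex.I * ω) * aaA1 C₀ C₁ ω S₂ t)
      + Complex.I * (b:ℂ) * aaA1 C₀ C₁ ω S₂ t
    = -((b':ℂ) * (-(Complex.I * ω) * aaA0 C₀ ω t) + Complex.I * (c:ℂ) * aaA0 C₀ ω t)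
      + (Complex.I / 2) * (a'':ℂ) *
          (-(Complex.I * ω) * (-(Complex.I * ω) * aaA0 C₀ ω t)) := by
  have h1c : (a:ℂ) * ω = b := by exact_mod_cast congrArg Complex.ofReal h1
  have h2c : (a:ℂ) * S₂ = (b':ℂ) * ω - c - (1/2) * a'' * ω^2 := by
    have := congrArg (Complex.ofReal) h2; push_cast at this; exact this
  simp only [aaA0, aaA1]
  set E := Complex.exp (-(Complex.I * (ω:ℂ) * (t:ℂ))) with hE
  linear_combination (-(Complex.I * E * ((C₁:ℂ) + Complex.I*C₀*S₂*t))) * h1c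
    + (Complex.I * E * (C₀:ℂ)) * h2c
    + (-(Complex.I/2) * (a'':ℂ) * (ω:ℂ)^2 * (C₀:ℂ) * E) * Complex.I_sq

/-- With `ω = f₁(τ)/f₀'(τ)` and `S̃₂ = (1/f₀'(τ))·(½·(f₁²/f₀')'(τ) − f₂(τ))`,
`a₀(t) = C₀e^{−iωt}` and `a₁(t) = (C₁ + iC₀S̃₂t)e^{−iωt}` satisfy the second transport
equation in action-angle variables:
`f₀'(τ)·a₁' + i·f₁(τ)·a₁ = −(f₁'(τ)·a₀' + i·f₂(τ)·a₀) + (i/2)·f₀''(τ)·a₀''`. -/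
theorem stmt_17 (f₀ f₁ f₂ : ℝ → ℝ) (τ : ℝ) (C₀ C₁ : ℝ)
    (hf₀ : DifferentiableAt ℝ f₀ τ) (hf₀' : DifferentiableAt ℝ (deriv f₀) τ)
    (hf₁ : DifferentiableAt ℝ f₁ τ) (hne : deriv f₀ τ ≠ 0) :
    ∀ t : ℝ,
      (↑(deriv f₀ τ) : ℂ) *
          deriv (aaA1 C₀ C₁ (f₁ τ / deriv f₀ τ)
            ((1 / deriv f₀ τ) *
              ((1 / 2) * deriv (fun σ => (f₁ σ) ^ 2 / deriv f₀ σ) τ - f₂ τ))) t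
        + Complex.I * (f₁ τ : ℂ) *
            aaA1 C₀ C₁ (f₁ τ / deriv f₀ τ)
              ((1 / deriv f₀ τ) *
                ((1 / 2) * deriv (fun σ => (f₁ σ) ^ 2 / deriv f₀ σ) τ - f₂ τ)) t
      = -((↑(deriv f₁ τ) : ℂ) * deriv (aaA0 C₀ (f₁ τ / deriv f₀ τ)) t
            + Complex.I * (f₂ τ : ℂ) * aaA0 C₀ (f₁ τ / deriv f₀ τ) t)
        + (Complex.I / 2) * (↑(deriv (deriv f₀) τ) : ℂ) *
            deriv (deriv (aaA0 C₀ (f₁ τ / deriv f₀ τ))) t := by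
  intro t
  have hD : deriv (fun σ => (f₁ σ) ^ 2 / deriv f₀ σ) τ
      = (2 * f₁ τ * deriv f₁ τ * deriv f₀ τ - (f₁ τ)^2 * deriv (deriv f₀) τ)
        / (deriv f₀ τ)^2 := by
    have h := ((hf₁.hasDerivAt.pow 2).div hf₀'.hasDerivAt hne).deriv
    rw [show (fun σ => (f₁ σ) ^ 2 / deriv f₀ σ) = f₁ ^ 2 / deriv f₀ from rfl, h]
    simp only [Pi.pow_apply]; norm_num
  rw [(hasDerivAt_aaA1 _ _ _ _ t).deriv, deriv2_aaA0, deriv_aaA0]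
  refine main_alg _ _ _ _ _ _ _ _ _ _ ?_ ?_
  · field_simp
  · rw [hD]; field_simp; ring
end
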